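/- For α ∈ (0,1) ∪ (1,∞), the function γ_α(p) = (α/(α-1)) · (((1+p)^α + (1-p)^α)^{1/α} - 2^{1/α}) is convex on [0,1]. -/

import Mathlib

open Set Real

noncomputable def gH (α p : ℝ) : ℝ := (1+p)^α + (1-p)^α
noncomputable def gE (α p : ℝ) : ℝ := α*(1+p)^(α-1) - α*(1-p)^(α-1)
noncomputable def gF1 (α p : ℝ) : ℝ := α/(α-1) * (1/α) * (gE α p * (gH α p)^(1/α - 1))
noncomputable def gF2 (α p : ℝ) : ℝ := α/(α-1) * (1/α) *
  ((α*(α-1)*(1+p)^(α-2) + α*(α-1)*(1-p)^(α-2)) * (gH α p)^(1/α-1)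
    + gE α p * (gE α p * (1/α - 1) * (gH α p)^(1/α-2)))

lemma hasDeriv_gH (α : ℝ) {p : ℝ} (h1 : (1:ℝ)+p ≠ 0) (h2 : (1:ℝ)-p ≠ 0) :
    HasDerivAt (gH α) (gE α p) p := by
  have A : HasDerivAt (fun q:ℝ => 1+q) 1 p := by simpa using (hasDerivAt_id p).const_add 1
  have B : HasDerivAt (fun q:ℝ => 1-q) (-1) p := by simpa using (hasDerivAt_id p).const_sub 1
  have A' := A.rpow_const (p := α) (Or.inl h1)
  have B' := B.rpow_const (p := α) (Or.inl h2)
  have := A'.add B'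
  refine this.congr_deriv ?_
  simp [gE]; ring

lemma hasDeriv_gE (α : ℝ) {p : ℝ} (h1 : (1:ℝ)+p ≠ 0) (h2 : (1:ℝ)-p ≠ 0) :
    HasDerivAt (gE α) (α*(α-1)*(1+p)^(α-2) + α*(α-1)*(1-p)^(α-2)) p := by
  have A : HasDerivAt (fun q:ℝ => 1+q) 1 p := by simpa using (hasDerivAt_id p).const_add 1
  have B : HasDerivAt (fun q:ℝ => 1-q) (-1) p := by simpa using (hasDerivAt_id p).const_sub 1
  have A' := (A.rpow_const (p := α-1) (Or.inl h1)).const_mul α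
  have B' := (B.rpow_const (p := α-1) (Or.inl h2)).const_mul α
  have := A'.sub B'
  refine this.congr_deriv ?_
  have e1 : α - 1 - 1 = α - 2 := by ring
  rw [e1]; ring

lemma hasDeriv_gF (α : ℝ) {p : ℝ} (hα : α ≠ 0) (h1 : (1:ℝ)+p ≠ 0) (h2 : (1:ℝ)-p ≠ 0)
    (hH : gH α p ≠ 0) :
    HasDerivAt (fun q => α/(α-1) * ((gH α q)^(1/α) - (2:ℝ)^(1/α))) (gF1 α p) p := by
  have h := ((hasDeriv_gH α h1 h2).rpow_const (p := 1/α) (Or.inl hH)).sub_const ((2:ℝ)^(1/α))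
  have := h.const_mul (α/(α-1))
  refine this.congr_deriv ?_
  simp [gF1]; ring

lemma hasDeriv_gF1 (α : ℝ) {p : ℝ} (h1 : (1:ℝ)+p ≠ 0) (h2 : (1:ℝ)-p ≠ 0)
    (hH : gH α p ≠ 0) :
    HasDerivAt (gF1 α) (gF2 α p) p := by
  have hK := (hasDeriv_gH α h1 h2).rpow_const (p := 1/α - 1) (Or.inl hH)
  have hprod := (hasDeriv_gE α h1 h2).mul hK
  have := hprod.const_mul (α/(α-1) * (1/α))
  refine this.congr_deriv ?_
  rw [show (1/α - 1 - 1) = 1/α - 2 from by ring]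
  simp only [gF2]

theorem gamma_convexOn (α : ℝ) (hα : α ∈ Set.Ioo (0:ℝ) 1 ∪ Set.Ioi (1:ℝ)) :
    ConvexOn ℝ (Set.Icc (0:ℝ) 1)
      (fun p : ℝ => (α / (α - 1)) * (((1 + p) ^ α + (1 - p) ^ α) ^ (1/α) - (2:ℝ) ^ (1/α))) := by
  have hα0 : 0 < α := by rcases hα with h | h; · exact h.1
                         · exact lt_trans one_pos h
  have hα1 : α - 1 ≠ 0 := by
    rcases hα with h | h
    · have := h.2; intro hc; linarith
    · have : (1:ℝ) < α := h; intro hc; linarith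
  have hαne : α ≠ 0 := ne_of_gt hα0
  set f : ℝ → ℝ := fun p : ℝ => (α / (α - 1)) * (((1 + p) ^ α + (1 - p) ^ α) ^ (1/α) - (2:ℝ) ^ (1/α)) with hf
  have hfeq : f = fun q => α/(α-1) * ((gH α q)^(1/α) - (2:ℝ)^(1/α)) := by
    funext q; simp [gH, hf]
  -- continuity
  have crp : ∀ q : ℝ, 0 < q → Continuous fun x : ℝ => x ^ q := fun q hq =>
    continuous_iff_continuousAt.2 fun x => Real.continuousAt_rpow_const x q (Or.inr hq.le)
  have hcont : Continuous f := by
    rw [hfeq]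
    apply Continuous.mul continuous_const
    apply Continuous.sub _ continuous_const
    exact (crp (1/α) (by positivity)).comp
      (((crp α hα0).comp (continuous_const.add continuous_id)).add
        ((crp α hα0).comp (continuous_const.sub continuous_id)))
  -- facts on Ioo
  have hIoo : ∀ p ∈ Ioo (0:ℝ) 1, (0:ℝ) < 1 + p ∧ (0:ℝ) < 1 - p ∧ 0 < gH α p := by
    intro p hp
    have h1 : (0:ℝ) < 1 + p := by linarith [hp.1]
    have h2 : (0:ℝ) < 1 - p := by linarith [hp.2]
    exact ⟨h1, h2, add_pos (Real.rpow_pos_of_pos h1 α) (Real.rpow_pos_of_pos h2 α)⟩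
  have hDf : ∀ p ∈ Ioo (0:ℝ) 1, HasDerivAt f (gF1 α p) p := by
    intro p hp
    obtain ⟨h1, h2, hH⟩ := hIoo p hp
    rw [hfeq]
    exact hasDeriv_gF α hαne h1.ne' h2.ne' hH.ne'
  have hDf1 : ∀ p ∈ Ioo (0:ℝ) 1, HasDerivAt (gF1 α) (gF2 α p) p := by
    intro p hp
    obtain ⟨h1, h2, hH⟩ := hIoo p hp
    exact hasDeriv_gF1 α h1.ne' h2.ne' hH.ne'
  -- nonnegativity of the second derivative
  have hF2 : ∀ p ∈ Ioo (0:ℝ) 1, 0 ≤ gF2 α p := by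
    intro p hp
    obtain ⟨h1, h2, hH⟩ := hIoo p hp
    set u : ℝ := 1 + p
    set v : ℝ := 1 - p
    set A : ℝ := u ^ α with hA
    set B : ℝ := v ^ α with hB
    set K : ℝ := (A + B) ^ (1/α - 2) with hK
    have hApos : 0 < A := Real.rpow_pos_of_pos h1 α
    have hBpos : 0 < B := Real.rpow_pos_of_pos h2 α
    have hKpos : 0 < K := Real.rpow_pos_of_pos (by positivity) _
    have hu1 : u ^ (α - 1) = A / u := by
      rw [hA, Real.rpow_sub h1, Real.rpow_one]
    have hv1 : v ^ (α - 1) = B / v := by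
      rw [hB, Real.rpow_sub h2, Real.rpow_one]
    have hu2 : u ^ (α - 2) = A / (u * u) := by
      rw [hA, Real.rpow_sub h1, show (2:ℝ) = 1 + 1 from by norm_num, Real.rpow_add h1,
        Real.rpow_one]
    have hv2 : v ^ (α - 2) = B / (v * v) := by
      rw [hB, Real.rpow_sub h2, show (2:ℝ) = 1 + 1 from by norm_num, Real.rpow_add h2,
        Real.rpow_one]
    have hHeq : gH α p = A + B := rfl
    have hK1 : (gH α p) ^ (1/α - 1) = K * (A + B) := by
      rw [hHeq, show (1/α - 1) = (1/α - 2) + 1 from by ring,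
        Real.rpow_add (show (0:ℝ) < A + B from by positivity), Real.rpow_one]
    have hK2 : (gH α p) ^ (1/α - 2) = K := by rw [hHeq]
    have key : gF2 α p = α * K * A * B * (u + v)^2 / (u^2 * v^2) := by
      simp only [gF2, gE, hK1, hK2]
      rw [hu1, hv1, hu2, hv2]
      field_simp
      ring
    rw [key]
    positivity
  -- assemble
  apply convexOn_of_deriv2_nonneg (convex_Icc 0 1) hcont.continuousOn
  · rw [interior_Icc]
    intro p hp
    exact (hDf p hp).differentiableAt.differentiableWithinAt
  · rw [interior_Icc]
    intro p hp
    have hev : deriv f =ᶠ[nhds p] gF1 α := by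
      filter_upwards [Ioo_mem_nhds hp.1 hp.2] with y hy using (hDf y hy).deriv
    exact ((hDf1 p hp).differentiableAt.congr_of_eventuallyEq hev).differentiableWithinAt
  · rw [interior_Icc]
    intro p hp
    have hev : deriv f =ᶠ[nhds p] gF1 α := by
      filter_upwards [Ioo_mem_nhds hp.1 hp.2] with y hy using (hDf y hy).deriv
    have : deriv^[2] f p = deriv (deriv f) p := by
      simp [Function.iterate_succ_apply']
    rw [this, hev.deriv_eq, (hDf1 p hp).deriv]
    exact hF2 p hp
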